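/- Let m ≥ 3 and let b̃ : ℝ^m → ℝ be measurable with 0 ≤ b̃(x) ≤ C(1+|x|²)^{-2} for all x ∈ ℝ^m and some constant C > 0. Then for every α ∈ (1/2, 1) there exists a constant C' > 0 such that for all ε ∈ (0,1): ∫_{ℝ^m} b̃(x) U_ε(x)² dx ≤ C'(ε² + ε^{2(1−α)}). In particular, ∫_{ℝ^m} b̃(x) U_ε(x)² dx → 0 as ε → 0⁺. -/

import Mathlib

open MeasureTheory Filter
open scoped ENNReal

/-- The standard bubble (Aubin–Talenti instanton)
`U_ε(x) = [m(m−2)]^{(m−2)/4} (ε/(ε² + |x|²))^{(m−2)/2}`. -/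
noncomputable def bubble (m : ℕ) (ε : ℝ) (x : EuclideanSpace ℝ (Fin m)) : ℝ :=
  ((m : ℝ) * ((m : ℝ) - 2)) ^ (((m : ℝ) - 2) / 4) *
    (ε / (ε ^ 2 + ‖x‖ ^ 2)) ^ (((m : ℝ) - 2) / 2)

private lemma rpow_mul_rpow_le_add_rpow {a b u v : ℝ} (ha : 0 < a) (hb : 0 < b)
    (hu : 0 ≤ u) (hv : 0 ≤ v) : a ^ u * b ^ v ≤ (a + b) ^ (u + v) := by
  have hab : (0:ℝ) < a + b := by linarith
  have h1 : a ^ u ≤ (a + b) ^ u := Real.rpow_le_rpow ha.le (by linarith) hu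
  have h2 : b ^ v ≤ (a + b) ^ v := Real.rpow_le_rpow hb.le (by linarith) hv
  calc a ^ u * b ^ v ≤ (a + b) ^ u * (a + b) ^ v :=
        mul_le_mul h1 h2 (Real.rpow_nonneg hb.le v) (Real.rpow_nonneg hab.le u)
    _ = (a + b) ^ (u + v) := (Real.rpow_add hab u v).symm

private lemma core_bound {m : ℕ} (hm : 3 ≤ m) {α ε r : ℝ} (hα1 : 1/2 < α) (hα2 : α < 1)
    (hε : 0 < ε) (hr : 0 < r) :
    (ε / (ε^2 + r^2)) ^ ((m:ℝ) - 2) ≤ ε ^ (2*(1-α)) * r ^ (-((m:ℝ) - 2*α)) := by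
  have hm3 : (3:ℝ) ≤ (m:ℝ) := by exact_mod_cast hm
  set M : ℝ := (m:ℝ) - 2 with hMdef
  have hM : 1 ≤ M := by rw [hMdef]; linarith
  set w₁ : ℝ := M - 2*(1-α) with hw1def
  set w₂ : ℝ := (m:ℝ) - 2*α with hw2def
  have hw₁ : 0 ≤ w₁ := by rw [hw1def, hMdef]; linarith
  have hw₂ : 0 ≤ w₂ := by rw [hw2def]; linarith
  have hden : (0:ℝ) < ε^2 + r^2 := by positivity
  have key : ε ^ w₁ * r ^ w₂ ≤ (ε^2 + r^2) ^ M := by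
    have h1 : ε ^ w₁ = (ε^2) ^ (w₁/2) := by
      rw [← Real.rpow_natCast ε 2, ← Real.rpow_mul hε.le]
      congr 1
      push_cast
      ring
    have h2 : r ^ w₂ = (r^2) ^ (w₂/2) := by
      rw [← Real.rpow_natCast r 2, ← Real.rpow_mul hr.le]
      congr 1
      push_cast
      ring
    rw [h1, h2]
    calc (ε^2) ^ (w₁/2) * (r^2) ^ (w₂/2) ≤ (ε^2 + r^2) ^ (w₁/2 + w₂/2) :=
          rpow_mul_rpow_le_add_rpow (by positivity) (by positivity) (by linarith) (by linarith)
      _ = (ε^2 + r^2) ^ M := by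
          rw [show w₁/2 + w₂/2 = M by rw [hw1def, hw2def, hMdef]; ring]
  have hεM : (0:ℝ) < ε ^ M := Real.rpow_pos_of_pos hε M
  have hpos : (0:ℝ) < ε ^ w₁ * r ^ w₂ := by positivity
  calc (ε / (ε^2 + r^2)) ^ M = ε ^ M / (ε^2 + r^2) ^ M := Real.div_rpow hε.le hden.le M
    _ ≤ ε ^ M / (ε ^ w₁ * r ^ w₂) := by gcongr
    _ = ε ^ (2*(1-α)) * r ^ (-w₂) := by
        rw [div_mul_eq_div_div, ← Real.rpow_sub hε,
          show M - w₁ = 2*(1-α) by rw [hw1def]; ring,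
          Real.rpow_neg hr.le, div_eq_mul_inv]

private lemma finite_inner (m : ℕ) (hm : 3 ≤ m) {p : ℝ} (hp0 : 0 < p) (hpm : p < m) :
    ∫⁻ x : EuclideanSpace ℝ (Fin m) in Metric.ball 0 1, ENNReal.ofReal (‖x‖ ^ (-p)) < ∞ := by
  have hmeas : Measurable fun x : EuclideanSpace ℝ (Fin m) => ‖x‖ ^ (-p) := by fun_prop
  set μ := (volume : Measure (EuclideanSpace ℝ (Fin m))).restrict (Metric.ball 0 1) with hμ
  haveI : IsFiniteMeasure μ :=
    ⟨by rw [hμ, Measure.restrict_apply_univ]; exact measure_ball_lt_top⟩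
  rw [lintegral_eq_lintegral_meas_le μ
    (Eventually.of_forall fun x => Real.rpow_nonneg (norm_nonneg x) _) hmeas.aemeasurable]
  rw [show Set.Ioi (0:ℝ) = Set.Ioc 0 1 ∪ Set.Ioi 1 from (Set.Ioc_union_Ioi_eq_Ioi zero_le_one).symm,
    lintegral_union measurableSet_Ioi (Set.Ioc_disjoint_Ioi le_rfl)]
  apply ENNReal.add_lt_top.mpr
  constructor
  · calc ∫⁻ t in Set.Ioc (0:ℝ) 1, μ {a | t ≤ ‖a‖ ^ (-p)}
        ≤ ∫⁻ _t in Set.Ioc (0:ℝ) 1, μ Set.univ :=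
          lintegral_mono fun t => measure_mono (Set.subset_univ _)
      _ = μ Set.univ * volume (Set.Ioc (0:ℝ) 1) := setLIntegral_const _ _
      _ < ∞ := by
          apply ENNReal.mul_lt_top (measure_lt_top _ _)
          simp [Real.volume_Ioc]
  · have hB : ∀ t ∈ Set.Ioi (1:ℝ), μ {a | t ≤ ‖a‖ ^ (-p)} ≤
        ENNReal.ofReal (t ^ ((-p)⁻¹ * m)) *
          volume (Metric.ball (0:EuclideanSpace ℝ (Fin m)) 1) := by
      intro t ht
      have ht1 : (1:ℝ) < t := ht
      have ht0 : (0:ℝ) < t := by linarith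
      have hsub : {a : EuclideanSpace ℝ (Fin m) | t ≤ ‖a‖ ^ (-p)} ⊆
          Metric.closedBall 0 (t ^ (-p)⁻¹) := by
        intro a ha
        simp only [Set.mem_setOf_eq] at ha
        have hna : 0 < ‖a‖ := by
          rcases eq_or_lt_of_le (norm_nonneg a) with h | h
          · exfalso
            rw [← h, Real.zero_rpow (by simpa using hp0.ne')] at ha
            linarith
          · exact h
        rw [Metric.mem_closedBall, dist_zero_right]
        exact (Real.le_rpow_inv_iff_of_neg hna ht0 (by linarith : -p < 0)).mpr ha
      calc μ {a : EuclideanSpace ℝ (Fin m) | t ≤ ‖a‖ ^ (-p)}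
          ≤ volume (Metric.closedBall (0:EuclideanSpace ℝ (Fin m)) (t ^ (-p)⁻¹)) :=
            le_trans (Measure.restrict_apply_le _ _) (measure_mono hsub)
        _ = ENNReal.ofReal ((t ^ (-p)⁻¹) ^ Module.finrank ℝ (EuclideanSpace ℝ (Fin m))) *
              volume (Metric.ball (0:EuclideanSpace ℝ (Fin m)) 1) :=
            Measure.addHaar_closedBall _ _ (Real.rpow_nonneg ht0.le _)
        _ = ENNReal.ofReal (t ^ ((-p)⁻¹ * m)) * volume (Metric.ball (0:EuclideanSpace ℝ (Fin m)) 1) := by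
            rw [finrank_euclideanSpace_fin, ← Real.rpow_natCast (t ^ (-p)⁻¹) m,
              ← Real.rpow_mul ht0.le]
    calc ∫⁻ t in Set.Ioi (1:ℝ), μ {a | t ≤ ‖a‖ ^ (-p)}
        ≤ ∫⁻ t in Set.Ioi (1:ℝ), ENNReal.ofReal (t ^ ((-p)⁻¹ * m)) *
            volume (Metric.ball (0:EuclideanSpace ℝ (Fin m)) 1) :=
          setLIntegral_mono' measurableSet_Ioi hB
      _ = (∫⁻ t in Set.Ioi (1:ℝ), ENNReal.ofReal (t ^ ((-p)⁻¹ * m))) *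
            volume (Metric.ball (0:EuclideanSpace ℝ (Fin m)) 1) :=
          lintegral_mul_const' _ _ measure_ball_lt_top.ne
      _ < ∞ := by
          apply ENNReal.mul_lt_top _ measure_ball_lt_top
          apply IntegrableOn.setLIntegral_lt_top
          apply integrableOn_Ioi_rpow_of_lt _ one_pos
          rw [show (-p)⁻¹ * m = -((m:ℝ)/p) by rw [inv_neg, neg_mul, neg_inj, inv_mul_eq_div]]
          have : (1:ℝ) < (m:ℝ)/p := (one_lt_div hp0).mpr hpm
          linarith

private lemma finite_J (m : ℕ) (hm : 3 ≤ m) {p : ℝ} (hp0 : 0 < p) (hpm : p < m)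
    (hp4 : (m:ℝ) < p + 4) :
    ∫⁻ x : EuclideanSpace ℝ (Fin m),
      ENNReal.ofReal (‖x‖ ^ (-p) * ((1 + ‖x‖^2)^2)⁻¹) < ∞ := by
  rw [← lintegral_add_compl (μ := volume)
    (fun x : EuclideanSpace ℝ (Fin m) => ENNReal.ofReal (‖x‖ ^ (-p) * ((1 + ‖x‖^2)^2)⁻¹))
    (measurableSet_ball (x := (0:EuclideanSpace ℝ (Fin m))) (ε := 1))]
  apply ENNReal.add_lt_top.mpr
  constructor
  · calc ∫⁻ x : EuclideanSpace ℝ (Fin m) in Metric.ball 0 1,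
        ENNReal.ofReal (‖x‖ ^ (-p) * ((1 + ‖x‖^2)^2)⁻¹)
        ≤ ∫⁻ x : EuclideanSpace ℝ (Fin m) in Metric.ball 0 1, ENNReal.ofReal (‖x‖ ^ (-p)) := by
          apply lintegral_mono
          intro x
          apply ENNReal.ofReal_le_ofReal
          apply mul_le_of_le_one_right (Real.rpow_nonneg (norm_nonneg x) _)
          rw [inv_le_one_iff₀]
          right
          nlinarith [norm_nonneg x, sq_nonneg ‖x‖]
      _ < ∞ := finite_inner m hm hp0 hpm
  · have hbd : ∀ x : EuclideanSpace ℝ (Fin m), x ∈ (Metric.ball (0:EuclideanSpace ℝ (Fin m)) 1)ᶜ →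
        ‖x‖ ^ (-p) * ((1 + ‖x‖^2)^2)⁻¹ ≤ (2:ℝ)^p * 4 * (1 + ‖x‖) ^ (-(p+4)) := by
      intro x hx
      have hx1 : (1:ℝ) ≤ ‖x‖ := by
        simpa [Metric.mem_ball, dist_zero_right] using hx
      have hxpos : (0:ℝ) < ‖x‖ := by linarith
      have hbase : (0:ℝ) < 1 + ‖x‖ := by linarith
      have h1 : ‖x‖ ^ (-p) ≤ (2:ℝ)^p * (1 + ‖x‖) ^ (-p) := by
        have := (Real.rpow_le_rpow_iff_of_neg hxpos (by positivity : (0:ℝ) < (1+‖x‖)/2)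
          (by linarith : -p < 0)).mpr (by linarith : (1+‖x‖)/2 ≤ ‖x‖)
        calc ‖x‖ ^ (-p) ≤ ((1+‖x‖)/2) ^ (-p) := this
          _ = (2:ℝ)^p * (1 + ‖x‖) ^ (-p) := by
              rw [Real.div_rpow hbase.le (by norm_num : (0:ℝ) ≤ 2),
                Real.rpow_neg (by norm_num : (0:ℝ) ≤ 2), div_eq_mul_inv, inv_inv, mul_comm]
      have h2 : ((1 + ‖x‖^2)^2)⁻¹ ≤ 4 * (1 + ‖x‖) ^ (-(4:ℝ)) := by
        have hA : (0:ℝ) < (1 + ‖x‖^2)^2 := by positivity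
        have hB : (0:ℝ) < (1 + ‖x‖)^(4:ℕ) := by positivity
        have hq : (1 + ‖x‖)^(4:ℕ) ≤ 4 * (1 + ‖x‖^2)^2 := by
          nlinarith [sq_nonneg (1 - ‖x‖), sq_nonneg ((1-‖x‖)*(1+‖x‖)), norm_nonneg x,
            sq_nonneg ‖x‖, sq_nonneg (1+‖x‖), sq_nonneg (1-‖x‖^2)]
        have hrw : (1 + ‖x‖) ^ (-(4:ℝ)) = ((1 + ‖x‖)^(4:ℕ))⁻¹ := by
          rw [Real.rpow_neg hbase.le]; norm_cast
        rw [hrw, inv_eq_one_div, show (4:ℝ) * ((1+‖x‖)^(4:ℕ))⁻¹ = 4 / (1+‖x‖)^(4:ℕ) by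
          rw [div_eq_mul_inv], div_le_div_iff₀ hA hB]
        nlinarith [hq]
      calc ‖x‖ ^ (-p) * ((1 + ‖x‖^2)^2)⁻¹
          ≤ ((2:ℝ)^p * (1 + ‖x‖) ^ (-p)) * (4 * (1 + ‖x‖) ^ (-(4:ℝ))) := by
            apply mul_le_mul h1 h2 (by positivity) (by positivity)
        _ = (2:ℝ)^p * 4 * ((1 + ‖x‖) ^ (-p) * (1 + ‖x‖) ^ (-(4:ℝ))) := by ring
        _ = (2:ℝ)^p * 4 * (1 + ‖x‖) ^ (-(p+4)) := by
            rw [← Real.rpow_add hbase, show -p + -(4:ℝ) = -(p+4) by ring]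
    calc ∫⁻ x : EuclideanSpace ℝ (Fin m) in (Metric.ball 0 1)ᶜ,
        ENNReal.ofReal (‖x‖ ^ (-p) * ((1 + ‖x‖^2)^2)⁻¹)
        ≤ ∫⁻ x : EuclideanSpace ℝ (Fin m) in (Metric.ball 0 1)ᶜ,
            ENNReal.ofReal ((2:ℝ)^p * 4 * (1 + ‖x‖) ^ (-(p+4))) :=
          setLIntegral_mono' (measurableSet_ball.compl) fun x hx =>
            ENNReal.ofReal_le_ofReal (hbd x hx)
      _ ≤ ∫⁻ x : EuclideanSpace ℝ (Fin m),
            ENNReal.ofReal ((2:ℝ)^p * 4 * (1 + ‖x‖) ^ (-(p+4))) :=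
          setLIntegral_le_lintegral _ _
      _ = ENNReal.ofReal ((2:ℝ)^p * 4) *
            ∫⁻ x : EuclideanSpace ℝ (Fin m), ENNReal.ofReal ((1 + ‖x‖) ^ (-(p+4))) := by
          simp_rw [ENNReal.ofReal_mul (by positivity : (0:ℝ) ≤ (2:ℝ)^p * 4)]
          rw [lintegral_const_mul' _ _ ENNReal.ofReal_ne_top]
      _ < ∞ := by
          apply ENNReal.mul_lt_top ENNReal.ofReal_lt_top
          apply finite_integral_one_add_norm
          rw [finrank_euclideanSpace_fin]
          exact hp4

private lemma bound_alpha (m : ℕ) (hm : 3 ≤ m)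
    (b : EuclideanSpace ℝ (Fin m) → ℝ) (C : ℝ) (hC : 0 < C)
    (hb_nonneg : ∀ x, 0 ≤ b x) (hb_bound : ∀ x, b x ≤ C / (1 + ‖x‖ ^ 2) ^ 2)
    (α : ℝ) (hα1 : 1/2 < α) (hα2 : α < 1) :
    ∃ C' : ℝ, 0 < C' ∧ ∀ ε : ℝ, 0 < ε → ε < 1 →
      (∫⁻ x : EuclideanSpace ℝ (Fin m), ENNReal.ofReal (b x * bubble m ε x ^ 2)) ≤
        ENNReal.ofReal (C' * (ε ^ 2 + ε ^ (2 * (1 - α)))) := by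
  have hm3 : (3:ℝ) ≤ (m:ℝ) := by exact_mod_cast hm
  set p : ℝ := (m:ℝ) - 2*α with hpdef
  have hp0 : 0 < p := by rw [hpdef]; linarith
  have hpm : p < m := by rw [hpdef]; linarith
  have hp4 : (m:ℝ) < p + 4 := by rw [hpdef]; linarith
  set K : ℝ := ((m:ℝ) * ((m:ℝ) - 2)) ^ (((m:ℝ) - 2)/4) with hKdef
  have hKpos : 0 < K := Real.rpow_pos_of_pos (by nlinarith) _
  set J := ∫⁻ x : EuclideanSpace ℝ (Fin m),
    ENNReal.ofReal (‖x‖ ^ (-p) * ((1 + ‖x‖^2)^2)⁻¹) with hJdef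
  have hJ : J < ∞ := finite_J m hm hp0 hpm hp4
  refine ⟨C * K^2 * (J.toReal + 1), by positivity, fun ε hε hε1 => ?_⟩
  haveI : Nonempty (Fin m) := ⟨⟨0, by omega⟩⟩
  have hzero : (volume : Measure (EuclideanSpace ℝ (Fin m))) {0} = 0 := measure_singleton 0
  have hc : 0 ≤ C * K^2 * ε ^ (2*(1-α)) := by positivity
  have hae : ∀ᵐ x : EuclideanSpace ℝ (Fin m), ENNReal.ofReal (b x * bubble m ε x ^ 2) ≤
      ENNReal.ofReal ((C * K^2 * ε ^ (2*(1-α))) * (‖x‖ ^ (-p) * ((1 + ‖x‖^2)^2)⁻¹)) := by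
    filter_upwards [compl_mem_ae_iff.mpr hzero] with x hx
    apply ENNReal.ofReal_le_ofReal
    have hxn : 0 < ‖x‖ := by
      simp only [Set.mem_compl_iff, Set.mem_singleton_iff] at hx
      exact norm_pos_iff.mpr hx
    have hden : (0:ℝ) < ε^2 + ‖x‖^2 := by positivity
    have ht : (0:ℝ) < ε / (ε^2 + ‖x‖^2) := by positivity
    have hbub : bubble m ε x ^ 2 = K^2 * (ε / (ε^2 + ‖x‖^2)) ^ ((m:ℝ) - 2) := by
      rw [bubble, mul_pow, ← hKdef]
      congr 1
      rw [← Real.rpow_natCast ((ε / (ε^2 + ‖x‖^2)) ^ (((m:ℝ) - 2)/2)) 2,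
        ← Real.rpow_mul ht.le]
      norm_num
    have hcore := core_bound hm hα1 hα2 hε hxn
    have hbb : b x ≤ C * ((1 + ‖x‖^2)^2)⁻¹ := by
      rw [← div_eq_mul_inv]; exact hb_bound x
    calc b x * bubble m ε x ^ 2
        = b x * (K^2 * (ε / (ε^2 + ‖x‖^2)) ^ ((m:ℝ) - 2)) := by rw [hbub]
      _ ≤ (C * ((1 + ‖x‖^2)^2)⁻¹) * (K^2 * (ε ^ (2*(1-α)) * ‖x‖ ^ (-p))) := by
          apply mul_le_mul hbb _ (by positivity) (by positivity)
          exact mul_le_mul_of_nonneg_left hcore (by positivity)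
      _ = (C * K^2 * ε ^ (2*(1-α))) * (‖x‖ ^ (-p) * ((1 + ‖x‖^2)^2)⁻¹) := by ring
  calc ∫⁻ x : EuclideanSpace ℝ (Fin m), ENNReal.ofReal (b x * bubble m ε x ^ 2)
      ≤ ∫⁻ x : EuclideanSpace ℝ (Fin m), ENNReal.ofReal
          ((C * K^2 * ε ^ (2*(1-α))) * (‖x‖ ^ (-p) * ((1 + ‖x‖^2)^2)⁻¹)) :=
        lintegral_mono_ae hae
    _ = ENNReal.ofReal (C * K^2 * ε ^ (2*(1-α))) * J := by
        simp_rw [ENNReal.ofReal_mul hc]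
        rw [lintegral_const_mul' _ _ ENNReal.ofReal_ne_top, hJdef]
    _ ≤ ENNReal.ofReal (C * K^2 * (J.toReal + 1) * (ε^2 + ε^(2*(1-α)))) := by
        conv_lhs => rw [← ENNReal.ofReal_toReal hJ.ne, ← ENNReal.ofReal_mul hc]
        apply ENNReal.ofReal_le_ofReal
        have h1 : 0 ≤ J.toReal := ENNReal.toReal_nonneg
        have h2 : 0 ≤ ε^(2*(1-α)) := Real.rpow_nonneg hε.le _
        have h3 : 0 ≤ ε^2 := sq_nonneg ε
        have h4 : 0 ≤ C * K^2 := by positivity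
        nlinarith [mul_nonneg h4 (mul_nonneg h1 h3), mul_nonneg h4 h3, mul_nonneg h4 h2]

/-- if `0 ≤ b̃(x) ≤ C(1+|x|²)⁻²`, then for every `α ∈ (1/2, 1)` there is
`C' > 0` with `∫ b̃ U_ε² ≤ C'(ε² + ε^{2(1−α)})` for all `ε ∈ (0,1)`; in particular
`∫ b̃ U_ε² → 0` as `ε → 0⁺`. -/
theorem bubble_weighted_l2_estimate (m : ℕ) (hm : 3 ≤ m)
    (b : EuclideanSpace ℝ (Fin m) → ℝ) (hb_meas : Measurable b)
    (C : ℝ) (hC : 0 < C)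
    (hb_nonneg : ∀ x, 0 ≤ b x)
    (hb_bound : ∀ x, b x ≤ C / (1 + ‖x‖ ^ 2) ^ 2) :
    (∀ α : ℝ, 1 / 2 < α → α < 1 → ∃ C' : ℝ, 0 < C' ∧
      ∀ ε : ℝ, 0 < ε → ε < 1 →
        (∫⁻ x : EuclideanSpace ℝ (Fin m), ENNReal.ofReal (b x * bubble m ε x ^ 2)) ≤
          ENNReal.ofReal (C' * (ε ^ 2 + ε ^ (2 * (1 - α))))) ∧
    Tendsto (fun ε : ℝ =>
        ∫⁻ x : EuclideanSpace ℝ (Fin m), ENNReal.ofReal (b x * bubble m ε x ^ 2))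
      (nhdsWithin 0 (Set.Ioi 0)) (nhds 0) := by
  constructor
  · intro α hα1 hα2
    exact bound_alpha m hm b C hC hb_nonneg hb_bound α hα1 hα2
  · obtain ⟨C', hC', hbd⟩ := bound_alpha m hm b C hC hb_nonneg hb_bound (3/4)
      (by norm_num) (by norm_num)
    have hupper : Tendsto (fun ε : ℝ => ENNReal.ofReal (C' * (ε^2 + ε^(2*(1-(3/4:ℝ))))))
        (nhdsWithin 0 (Set.Ioi 0)) (nhds 0) := by
      have hcont : ContinuousAt (fun ε : ℝ => C' * (ε^2 + ε^(2*(1-(3/4:ℝ))))) 0 := by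
        apply ContinuousAt.mul continuousAt_const
        exact ContinuousAt.add (by fun_prop)
          (Real.continuousAt_rpow_const 0 _ (Or.inr (by norm_num)))
      have hreal : Tendsto (fun ε : ℝ => C' * (ε^2 + ε^(2*(1-(3/4:ℝ))))) (nhds 0) (nhds 0) := by
        have := hcont.tendsto
        simpa [Real.zero_rpow (by norm_num : (2*(1-(3/4:ℝ))) ≠ 0)] using this
      have := (ENNReal.tendsto_ofReal hreal).mono_left (nhdsWithin_le_nhds (s := Set.Ioi (0:ℝ)))
      simpa using this
    refine tendsto_of_tendsto_of_tendsto_of_le_of_le' tendsto_const_nhds hupper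
      (Eventually.of_forall fun ε => zero_le) ?_
    filter_upwards [self_mem_nhdsWithin,
      nhdsWithin_le_nhds (Iio_mem_nhds (by norm_num : (0:ℝ) < 1))] with ε hε hε1
    exact hbd ε hε hε1
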